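/- Let A be an Iwanaga-Gorenstein algebra of Gorenstein dimension at most 1. Suppose L and N are Cohen-Macaulay A-modules each admitting a short exact sequence 0 → Y → P → X → 0 with Y Cohen-Macaulay containing the module as a direct summand, P projective, and X supported only on a fixed set I of vertices. Then every extension M of N by L (i.e., every middle term of a short exact sequence 0 → L → M → N → 0) admits a short exact sequence of the same form: 0 → Y_M → P_L ⊕ P_N → X_M → 0 with Y_M Cohen-Macaulay containing M as a summand and X_M supported only on vertices of I. -/

import Mathlib

noncomputable section

open CategoryTheory Opposite DirectSum MulOpposite

/-- An idempotent is primitive if it is nonzero and is not the sum of two nonzero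
orthogonal idempotents. -/
def IsPrimitiveIdempotent {A : Type} [Ring A] (a : A) : Prop :=
  IsIdempotentElem a ∧ a ≠ 0 ∧
    ∀ b c : A, IsIdempotentElem b → IsIdempotentElem c → b * c = 0 → c * b = 0 →
      a = b + c → b = 0 ∨ c = 0

/-- A complete family of orthogonal idempotents. -/
def CompOrthIdem {A ι : Type} [Ring A] [Fintype ι] (e : ι → A) : Prop :=
  (∀ i j, i ≠ j → e i * e j = 0) ∧ (∀ i, IsIdempotentElem (e i)) ∧ (∑ i, e i) = 1

/-- The two-sided ideal `A e A` generated by an idempotent `e`, viewed as a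
right `A`-module (i.e. a module over `Aᵐᵒᵖ`): it is the right `A`-submodule of `A`
spanned by all elements `b * e`. -/
def genIdeal {A : Type} [Ring A] (e : A) : Submodule Aᵐᵒᵖ A :=
  Submodule.span Aᵐᵒᵖ {x | ∃ b : A, x = b * e}

/-- The indecomposable projective right module `e A` at the idempotent `e`. -/
def pIdeal {A : Type} [Ring A] (e : A) : Submodule Aᵐᵒᵖ A :=
  Submodule.span Aᵐᵒᵖ ({e} : Set A)

/-- The radical of a module: the intersection of all maximal submodules.
For a finite dimensional module `M` over a finite dimensional algebra this is `M · rad A`. -/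
def radical (R M : Type) [Ring R] [AddCommGroup M] [Module R M] : Submodule R M :=
  sInf {m | IsCoatom m}

/-- `Ext¹` for right `A`-modules, as a `k`-module. -/
abbrev rext1 (k : Type) [Field k] (A : Type) [Ring A] [Algebra k A]
    (M N : ModuleCat.{0} Aᵐᵒᵖ) : ModuleCat.{0} k :=
  ((Ext k (ModuleCat.{0} Aᵐᵒᵖ) 1).obj (op M)).obj N

/-- A right `A`-module `M` is Cohen-Macaulay if `Ext¹_A(M, A) = 0`. -/
def IsCM (k : Type) [Field k] (A : Type) [Ring A] [Algebra k A]
    (M : ModuleCat.{0} Aᵐᵒᵖ) : Prop :=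
  Subsingleton (rext1 k A M (ModuleCat.of Aᵐᵒᵖ A))

/-- A module has injective dimension at most 1: it admits an injective
coresolution `0 → M → I₀ → I₁ → 0`. -/
def InjDimLE1 (R : Type) [Ring R] (M : ModuleCat.{0} R) : Prop :=
  ∃ (I₀ I₁ : ModuleCat.{0} R) (f : M →ₗ[R] I₀) (g : I₀ →ₗ[R] I₁),
    Module.Injective R I₀ ∧ Module.Injective R I₁ ∧
    Function.Injective f ∧ Function.Surjective g ∧ Function.Exact f g

/-- A module has projective dimension at most 1: it admits a projective
resolution `0 → P₁ → P₀ → M → 0`. -/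
def ProjDimLE1 (R : Type) [Ring R] (M : ModuleCat.{0} R) : Prop :=
  ∃ (P₀ P₁ : ModuleCat.{0} R) (g : P₀ →ₗ[R] M) (f : P₁ →ₗ[R] P₀),
    Module.Projective R P₀ ∧ Module.Projective R P₁ ∧
    Function.Surjective g ∧ Function.Injective f ∧ Function.Exact f g

/-- `R` is Iwanaga-Gorenstein of Gorenstein dimension at most 1: every projective
module has injective dimension at most 1 and every injective module has projective
dimension at most 1. -/
def IwanagaGorenstein1 (R : Type) [Ring R] : Prop :=
  (∀ P : ModuleCat.{0} R, Module.Projective R P → InjDimLE1 R P) ∧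
  (∀ I : ModuleCat.{0} R, Module.Injective R I → ProjDimLE1 R I)


def SplitAll (R : Type) [Ring R] (W X : ModuleCat.{0} R) : Prop :=
  ∀ (E : ModuleCat.{0} R) (i : W →ₗ[R] E) (g : E →ₗ[R] X),
    Function.Injective i → Function.Surjective g → Function.Exact i g →
    ∃ σ : X →ₗ[R] E, g ∘ₗ σ = LinearMap.id

lemma retraction_of_section {R : Type} [Ring R] {W E X : Type} [AddCommGroup W] [Module R W]
    [AddCommGroup E] [Module R E] [AddCommGroup X] [Module R X]
    (i : W →ₗ[R] E) (g : E →ₗ[R] X) (hi : Function.Injective i)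
    (hig : Function.Exact i g) (σ : X →ₗ[R] E) (hσ : g ∘ₗ σ = LinearMap.id) :
    ∃ ρ : E →ₗ[R] W, ρ ∘ₗ i = LinearMap.id := by
  have hker : LinearMap.ker g = LinearMap.range i := LinearMap.exact_iff.mp hig
  set q : E →ₗ[R] E := LinearMap.id - σ ∘ₗ g with hq
  have hrange : ∀ x, q x ∈ LinearMap.range i := by
    intro x
    rw [← hker, LinearMap.mem_ker]
    have h1 : g (σ (g x)) = g x := LinearMap.congr_fun hσ (g x)
    simp [hq, h1]
  set eqi := LinearEquiv.ofInjective i hi with heqi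
  refine ⟨eqi.symm.toLinearMap ∘ₗ q.codRestrict (LinearMap.range i) hrange, ?_⟩
  apply LinearMap.ext; intro w
  have h1 : q (i w) = i w := by
    have h2 : g (i w) = 0 := hig.apply_apply_eq_zero w
    simp [hq, h2]
  have h3 : (q.codRestrict (LinearMap.range i) hrange) (i w) = eqi w := by
    apply Subtype.ext
    simp [heqi, h1, LinearEquiv.ofInjective_apply]
  simp [LinearMap.comp_apply, h3]


lemma homcond_iff_splitAll (R : Type) [Ring R] (W X : ModuleCat.{0} R)
    (X0 X1 X2 : Type) [AddCommGroup X0] [Module R X0] [AddCommGroup X1] [Module R X1]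
    [AddCommGroup X2] [Module R X2]
    (d10 : X1 →ₗ[R] X0) (d21 : X2 →ₗ[R] X1) (π0 : X0 →ₗ[R] X)
    (hproj0 : Module.Projective R X0)
    (hπ0 : Function.Surjective π0) (hex0 : Function.Exact d10 π0)
    (hex1 : Function.Exact d21 d10) :
    (∀ φ : X1 →ₗ[R] W, φ ∘ₗ d21 = 0 → ∃ ψ : X0 →ₗ[R] W, ψ ∘ₗ d10 = φ) ↔ SplitAll R W X := by
  constructor
  · -- homcond → SplitAll
    intro hc E i g hi hg hig
    have hker : LinearMap.ker g = LinearMap.range i := LinearMap.exact_iff.mp hig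
    -- lift π0 through g
    obtain ⟨h, hh⟩ := Module.projective_lifting_property g π0 hg
    -- φ₀ = h ∘ d10 lands in range i
    have hmem : ∀ x, h (d10 x) ∈ LinearMap.range i := by
      intro x
      rw [← hker, LinearMap.mem_ker]
      have : g (h (d10 x)) = π0 (d10 x) := LinearMap.congr_fun hh (d10 x)
      rw [this, hex0.apply_apply_eq_zero]
    set eqi := LinearEquiv.ofInjective i hi with heqi
    set φ : X1 →ₗ[R] W :=
      eqi.symm.toLinearMap ∘ₗ (h ∘ₗ d10).codRestrict (LinearMap.range i) hmem with hφ
    have hiφ : ∀ x, i (φ x) = h (d10 x) := by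
      intro x
      have : (eqi (φ x) : E) = h (d10 x) := by
        simp only [hφ, LinearMap.comp_apply, LinearEquiv.coe_coe, LinearEquiv.apply_symm_apply]
        rfl
      rw [← this]; rfl
    have hφ21 : φ ∘ₗ d21 = 0 := by
      apply LinearMap.ext; intro x
      apply hi
      have h0 : d10 (d21 x) = 0 := by
        have := hex1.apply_apply_eq_zero x
        exact this
      simp [LinearMap.comp_apply, hiφ, h0]
    obtain ⟨ψ, hψ⟩ := hc φ hφ21
    -- σ₀ = h - i∘ψ kills ker π0, factors through X
    set σ₀ : X0 →ₗ[R] E := h - i ∘ₗ ψ with hσ₀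
    have hσ₀ker : LinearMap.ker π0 ≤ LinearMap.ker σ₀ := by
      intro x hx
      rw [LinearMap.mem_ker] at hx ⊢
      obtain ⟨y, hy⟩ := (hex0 x).mp hx
      have h1 : ψ (d10 y) = φ y := LinearMap.congr_fun hψ y
      simp [hσ₀, ← hy, h1, hiφ]
    set eq2 := LinearMap.quotKerEquivOfSurjective π0 hπ0 with heq2
    set σ : X →ₗ[R] E := (LinearMap.ker π0).liftQ σ₀ hσ₀ker ∘ₗ eq2.symm.toLinearMap with hσ
    have heq2mk : ∀ x0 : X0, eq2 (Submodule.Quotient.mk x0) = π0 x0 := by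
      intro x0
      simp [heq2, LinearMap.quotKerEquivOfSurjective, LinearMap.quotKerEquivRange_apply_mk]
    have hσval : ∀ x0, σ (π0 x0) = σ₀ x0 := by
      intro x0
      have : eq2.symm (π0 x0) = Submodule.Quotient.mk x0 := by
        rw [LinearEquiv.symm_apply_eq, heq2mk]
      simp [hσ, this]
    refine ⟨σ, ?_⟩
    apply LinearMap.ext; intro x
    obtain ⟨x0, rfl⟩ := hπ0 x
    have h1 : g (σ₀ x0) = π0 x0 := by
      have h2 : g (i (ψ x0)) = 0 := hig.apply_apply_eq_zero (ψ x0)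
      have h3 : g (h x0) = π0 x0 := LinearMap.congr_fun hh x0
      simp [hσ₀, h2, h3]
    simp [LinearMap.comp_apply, hσval, h1]
  · -- SplitAll → homcond
    intro hs φ hφ21
    have hφker : LinearMap.ker d10 ≤ LinearMap.ker φ := by
      intro x hx
      rw [LinearMap.mem_ker] at hx ⊢
      obtain ⟨y, hy⟩ := (hex1 x).mp hx
      rw [← hy]
      exact LinearMap.congr_fun hφ21 y
    set τ : X1 →ₗ[R] (↥W × X0) := LinearMap.prod (φ) (-d10) with hτ
    set Wr := LinearMap.range τ with hWr
    set G := ModuleCat.of R ((↥W × X0) ⧸ Wr) with hG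
    set mk : (↥W × X0) →ₗ[R] G := Wr.mkQ with hmkdef
    have hmkeq : ∀ a b : (↥W × X0), a - b ∈ Wr → mk a = mk b := by
      intro a b hab
      exact (Submodule.Quotient.eq Wr).mpr hab
    have hmksurj : Function.Surjective mk := Wr.mkQ_surjective
    set iG : ↥W →ₗ[R] G := mk ∘ₗ LinearMap.inl R (↥W) X0 with hiG
    have hkill : ∀ y ∈ Wr, y ∈ LinearMap.ker (π0 ∘ₗ LinearMap.snd R (↥W) X0) := by
      rintro z ⟨y, rfl⟩
      rw [LinearMap.mem_ker]
      simp [hτ, hex0.apply_apply_eq_zero]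
    set gG : G →ₗ[R] X := Wr.liftQ (π0 ∘ₗ LinearMap.snd R (↥W) X0) hkill with hgG
    have hgGmk : ∀ z : (↥W × X0), gG (mk z) = π0 z.2 := fun z => rfl
    have hiGinj : Function.Injective iG := by
      intro a b hab
      have h1 : ((a, 0) : ↥W × X0) - (b, 0) ∈ Wr := (Submodule.Quotient.eq Wr).mp hab
      obtain ⟨y, hy⟩ := h1
      have h2 : φ y = a - b := by
        have := congrArg Prod.fst hy
        simpa [hτ] using this
      have h3 : -d10 y = 0 := by
        have := congrArg Prod.snd hy
        simpa [hτ] using this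
      have h4 : φ y = 0 := hφker (by rw [LinearMap.mem_ker]; simpa using h3)
      rw [h4] at h2
      exact sub_eq_zero.mp h2.symm
    have hgGsurj : Function.Surjective gG := by
      intro x
      obtain ⟨x0, rfl⟩ := hπ0 x
      exact ⟨mk (0, x0), hgGmk _⟩
    have hexG : Function.Exact iG gG := by
      intro z
      constructor
      · intro hz
        obtain ⟨⟨w, x0⟩, rfl⟩ := hmksurj z
        have h1 : π0 x0 = 0 := by rw [← hgGmk (w, x0)]; exact hz
        obtain ⟨y, hy⟩ := (hex0 x0).mp h1
        refine ⟨w + φ y, ?_⟩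
        show mk (w + φ y, 0) = mk (w, x0)
        apply hmkeq
        refine ⟨y, ?_⟩
        have : ((w + φ y, 0) : ↥W × X0) - (w, x0) = (φ y, -x0) := by
          simp [Prod.ext_iff]
        rw [this, hτ]
        simp [Prod.ext_iff, hy]
      · rintro ⟨w, rfl⟩
        show gG (iG w) = 0
        have : gG (iG w) = π0 0 := hgGmk (w, 0)
        rw [this, map_zero]
    obtain ⟨σ, hσ⟩ := hs G iG gG hiGinj hgGsurj hexG
    obtain ⟨ρ, hρ⟩ := retraction_of_section iG gG hiGinj hexG σ hσ
    refine ⟨ρ ∘ₗ (mk ∘ₗ LinearMap.inr R (↥W) X0), ?_⟩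
    apply LinearMap.ext; intro x
    have h1 : mk (0, d10 x) = mk (φ x, 0) := by
      apply hmkeq
      refine ⟨-x, ?_⟩
      have : ((0, d10 x) : ↥W × X0) - (φ x, 0) = (-φ x, d10 x) := by
        simp [Prod.ext_iff]
      rw [this, hτ]
      simp [Prod.ext_iff]
    simp only [LinearMap.comp_apply, LinearMap.inr_apply]
    rw [h1]
    have h2 : mk ((φ x : ↥W), (0:X0)) = iG (φ x) := rfl
    rw [h2]
    exact LinearMap.congr_fun hρ (φ x)

lemma modcat_subsingleton_iff_isZero {k : Type} [Ring k] (M : ModuleCat.{0} k) :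
    Subsingleton M ↔ Limits.IsZero M := by
  constructor
  · intro h; exact ModuleCat.isZero_of_subsingleton M
  · intro h
    refine ⟨fun a b => ?_⟩
    have h1 : (𝟙 M : M ⟶ M) = 0 := h.eq_of_src _ _
    calc a = (𝟙 M : M ⟶ M) a := rfl
    _ = (0 : M ⟶ M) a := by rw [h1]
    _ = (0 : M ⟶ M) b := rfl
    _ = (𝟙 M : M ⟶ M) b := by rw [h1]
    _ = b := rfl

lemma subsingleton_of_iso {k : Type} [Ring k] {M N : ModuleCat.{0} k} (e : M ≅ N)
    (h : Subsingleton N) : Subsingleton M := by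
  refine ⟨fun a b => ?_⟩
  have h2 : ∀ x : M, (e.hom ≫ e.inv) x = (𝟙 M : M ⟶ M) x := fun x => by rw [e.hom_inv_id]
  calc a = (e.hom ≫ e.inv) a := (h2 a).symm
  _ = e.inv (e.hom a) := rfl
  _ = e.inv (e.hom b) := congrArg _ (h.elim _ _)
  _ = (e.hom ≫ e.inv) b := rfl
  _ = b := h2 b


section Keystone
variable (k : Type) [Field k] (A : Type) [Ring A] [Algebra k A]

lemma subsingleton_ext_iff_splitAll (X W : ModuleCat.{0} Aᵐᵒᵖ) :
    Subsingleton (((Ext k (ModuleCat.{0} Aᵐᵒᵖ) 1).obj (op X)).obj W) ↔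
      SplitAll Aᵐᵒᵖ W X := by
  set P := ProjectiveResolution.of X with hP
  -- step 1 : subsingleton Ext iff homological condition on P
  have step1 : Subsingleton (((Ext k (ModuleCat.{0} Aᵐᵒᵖ) 1).obj (op X)).obj W) ↔
      (∀ φ : P.complex.X 1 ⟶ W, P.complex.d 2 1 ≫ φ = 0 →
        ∃ ψ : P.complex.X 0 ⟶ W, P.complex.d 1 0 ≫ ψ = φ) := by
    set CC := P.complex.linearYonedaObj k W with hCC
    have e := P.isoExt (R := k) 1 W
    have h1 : Subsingleton (((Ext k (ModuleCat.{0} Aᵐᵒᵖ) 1).obj (op X)).obj W) ↔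
        Subsingleton (CC.homology 1) :=
      ⟨fun h => subsingleton_of_iso e.symm h, fun h => subsingleton_of_iso e h⟩
    rw [h1, modcat_subsingleton_iff_isZero, ← HomologicalComplex.exactAt_iff_isZero_homology]
    rw [CC.exactAt_iff' 0 1 2 (by simp) (by simp)]
    rw [ShortComplex.moduleCat_exact_iff]
    constructor
    · intro h φ hφ
      obtain ⟨ψ, hψ⟩ := h φ hφ
      exact ⟨ψ, hψ⟩
    · intro h φ hφ
      obtain ⟨ψ, hψ⟩ := h φ hφ
      exact ⟨ψ, hψ⟩
  rw [step1]
  -- step 2 : concrete data from the resolution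
  have hproj0 : Module.Projective Aᵐᵒᵖ ↥(P.complex.X 0) :=
    (IsProjective.iff_projective (P.complex.X 0)).mpr (by exact inferInstanceAs (Projective (P.complex.X 0)))
  have hπ0 : Function.Surjective ((P.π.f 0).hom : P.complex.X 0 →ₗ[Aᵐᵒᵖ] X) :=
    (ModuleCat.epi_iff_surjective (P.π.f 0)).mp inferInstance
  have hd10π : ∀ y, ((P.π.f 0).hom : P.complex.X 0 →ₗ[Aᵐᵒᵖ] X) ((P.complex.d 1 0).hom y) = 0 := by
    intro y
    exact LinearMap.congr_fun (congrArg ModuleCat.Hom.hom P.complex_d_comp_π_f_zero) y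
  have hex0 : Function.Exact ((P.complex.d 1 0).hom : P.complex.X 1 →ₗ[Aᵐᵒᵖ] P.complex.X 0)
      ((P.π.f 0).hom : P.complex.X 0 →ₗ[Aᵐᵒᵖ] X) := by
    intro x
    constructor
    · intro hx
      exact (ShortComplex.moduleCat_exact_iff _).mp P.exact₀ x hx
    · rintro ⟨y, rfl⟩
      exact hd10π y
  have hex1 : Function.Exact ((P.complex.d 2 1).hom : P.complex.X 2 →ₗ[Aᵐᵒᵖ] P.complex.X 1)
      ((P.complex.d 1 0).hom : P.complex.X 1 →ₗ[Aᵐᵒᵖ] P.complex.X 0) := by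
    intro x
    constructor
    · intro hx
      exact (ShortComplex.moduleCat_exact_iff _).mp (P.exact_succ 0) x hx
    · rintro ⟨y, rfl⟩
      exact LinearMap.congr_fun (congrArg ModuleCat.Hom.hom (P.complex.d_comp_d 2 1 0)) y
  rw [← homcond_iff_splitAll Aᵐᵒᵖ W X _ _ _ _ _ _ hproj0 hπ0 hex0 hex1]
  constructor
  · intro h φ hφ
    obtain ⟨ψ, hψ⟩ := h (ModuleCat.ofHom φ) (by ext x; exact LinearMap.congr_fun hφ x)
    exact ⟨ψ.hom, congrArg ModuleCat.Hom.hom hψ⟩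
  · intro h φ hφ
    obtain ⟨ψ, hψ⟩ := h φ.hom (congrArg ModuleCat.Hom.hom hφ)
    exact ⟨ModuleCat.ofHom ψ, by ext x; exact LinearMap.congr_fun hψ x⟩
end Keystone

lemma section_of_retraction {R : Type} [Ring R] {W E X : Type} [AddCommGroup W] [Module R W]
    [AddCommGroup E] [Module R E] [AddCommGroup X] [Module R X]
    (i : W →ₗ[R] E) (g : E →ₗ[R] X) (hg : Function.Surjective g)
    (hig : Function.Exact i g) (ρ : E →ₗ[R] W) (hρ : ρ ∘ₗ i = LinearMap.id) :
    ∃ σ : X →ₗ[R] E, g ∘ₗ σ = LinearMap.id := by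
  set q : E →ₗ[R] E := LinearMap.id - i ∘ₗ ρ with hq
  have hqker : LinearMap.ker g ≤ LinearMap.ker q := by
    intro x hx
    rw [LinearMap.mem_ker] at hx ⊢
    obtain ⟨w, rfl⟩ := (hig x).mp hx
    have : ρ (i w) = w := LinearMap.congr_fun hρ w
    simp [hq, this]
  set eq2 := LinearMap.quotKerEquivOfSurjective g hg with heq2
  set σ : X →ₗ[R] E := (LinearMap.ker g).liftQ q hqker ∘ₗ eq2.symm.toLinearMap with hσ
  have heq2mk : ∀ x : E, eq2 (Submodule.Quotient.mk x) = g x := by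
    intro x
    simp [heq2, LinearMap.quotKerEquivOfSurjective, LinearMap.quotKerEquivRange_apply_mk]
  have hσval : ∀ x : E, σ (g x) = q x := by
    intro x
    have : eq2.symm (g x) = Submodule.Quotient.mk x := by
      rw [LinearEquiv.symm_apply_eq, heq2mk]
    simp [hσ, this]
  refine ⟨σ, ?_⟩
  apply LinearMap.ext; intro x
  obtain ⟨e, rfl⟩ := hg x
  have h1 : g (i (ρ e)) = 0 := hig.apply_apply_eq_zero (ρ e)
  simp [LinearMap.comp_apply, hσval, hq, h1]

lemma splitAll_closed_extensions (R : Type) [Ring R] (W : ModuleCat.{0} R)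
    (X₁ X₂ X₃ : ModuleCat.{0} R) (i₁ : X₁ →ₗ[R] X₂) (p : X₂ →ₗ[R] X₃)
    (hi₁ : Function.Injective i₁) (hp : Function.Surjective p)
    (hip : Function.Exact i₁ p)
    (h1 : SplitAll R W X₁) (h3 : SplitAll R W X₃) : SplitAll R W X₂ := by
  intro E i g hi hg hig
  have hkerg : LinearMap.ker g = LinearMap.range i := LinearMap.exact_iff.mp hig
  have hkerp : LinearMap.ker p = LinearMap.range i₁ := LinearMap.exact_iff.mp hip
  -- E₁ = g⁻¹(i₁ X₁)
  set E₁sub := Submodule.comap g (LinearMap.range i₁) with hE₁sub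
  set E₁ := ModuleCat.of R ↥E₁sub with hE₁
  set ince : E₁ →ₗ[R] E := E₁sub.subtype with hince
  set i' : W →ₗ[R] E₁ := i.codRestrict E₁sub (fun w => by
    rw [Submodule.mem_comap, hig.apply_apply_eq_zero]
    exact Submodule.zero_mem _) with hi'
  set eq1 := LinearEquiv.ofInjective i₁ hi₁ with heq1
  set g' : E₁ →ₗ[R] X₁ := eq1.symm.toLinearMap ∘ₗ
    ((g ∘ₗ ince).codRestrict (LinearMap.range i₁) (fun x => x.2)) with hg'
  have hg'val : ∀ z : E₁, i₁ (g' z) = g (ince z) := by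
    intro z
    have h2 : (eq1 (g' z) : X₂) = g (ince z) := by
      simp only [hg', LinearMap.comp_apply, LinearEquiv.coe_coe, LinearEquiv.apply_symm_apply]
      rfl
    rw [← h2]; rfl
  have hi'inj : Function.Injective i' := by
    intro a b hab
    apply hi
    have : ince (i' a) = ince (i' b) := congrArg ince hab
    exact this
  have hg'surj : Function.Surjective g' := by
    intro x₁
    obtain ⟨e, he⟩ := hg (i₁ x₁)
    have hmem : e ∈ E₁sub := by rw [Submodule.mem_comap, he]; exact ⟨x₁, rfl⟩
    refine ⟨⟨e, hmem⟩, ?_⟩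
    apply hi₁
    rw [hg'val]
    exact he
  have hexact' : Function.Exact i' g' := by
    intro z
    constructor
    · intro hz
      have h2 : g (ince z) = 0 := by rw [← hg'val, hz, map_zero]
      obtain ⟨w, hw⟩ := (hig (ince z)).mp h2
      refine ⟨w, ?_⟩
      apply Subtype.ext
      exact hw
    · rintro ⟨w, rfl⟩
      apply hi₁
      rw [hg'val, map_zero]
      exact hig.apply_apply_eq_zero w
  obtain ⟨σ₁, hσ₁⟩ := h1 E₁ i' g' hi'inj hg'surj hexact'
  set s₁ : X₁ →ₗ[R] E := ince ∘ₗ σ₁ with hs₁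
  have hgs₁ : ∀ x, g (s₁ x) = i₁ x := by
    intro x
    have h2 : g' (σ₁ x) = x := LinearMap.congr_fun hσ₁ x
    rw [hs₁, LinearMap.comp_apply, ← hg'val, h2]
  -- Ē = E / s₁(X₁)
  set S₁r := LinearMap.range s₁ with hS₁r
  set Ebar := ModuleCat.of R (↥E ⧸ S₁r) with hEbar
  set mk : E →ₗ[R] Ebar := S₁r.mkQ with hmk
  have hmkeq : ∀ a b : ↥E, a - b ∈ S₁r → mk a = mk b := fun a b hab =>
    (Submodule.Quotient.eq S₁r).mpr hab
  have hmksurj : Function.Surjective mk := S₁r.mkQ_surjective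
  set wbar : ↥W →ₗ[R] Ebar := mk ∘ₗ i with hwbar
  have hkill : ∀ z ∈ S₁r, z ∈ LinearMap.ker (p ∘ₗ g) := by
    rintro z ⟨x, rfl⟩
    rw [LinearMap.mem_ker, LinearMap.comp_apply, hgs₁]
    exact hip.apply_apply_eq_zero x
  set gbar : Ebar →ₗ[R] X₃ := S₁r.liftQ (p ∘ₗ g) hkill with hgbar
  have hgbarmk : ∀ e : ↥E, gbar (mk e) = p (g e) := fun e => rfl
  have hwbarinj : Function.Injective wbar := by
    intro a b hab
    have h2 : i a - i b ∈ S₁r := (Submodule.Quotient.eq S₁r).mp hab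
    obtain ⟨x, hx⟩ := h2
    have h3 : i₁ x = 0 := by
      rw [← hgs₁, hx, map_sub, hig.apply_apply_eq_zero, hig.apply_apply_eq_zero, sub_zero]
    have h4 : x = 0 := hi₁ (by rw [h3, map_zero])
    rw [h4, map_zero] at hx
    apply hi
    exact (sub_eq_zero.mp hx.symm)
  have hgbarsurj : Function.Surjective gbar := by
    intro x₃
    obtain ⟨x₂, rfl⟩ := hp x₃
    obtain ⟨e, rfl⟩ := hg x₂
    exact ⟨mk e, rfl⟩
  have hexbar : Function.Exact wbar gbar := by
    intro z
    constructor
    · intro hz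
      obtain ⟨e, rfl⟩ := hmksurj z
      have h2 : p (g e) = 0 := hz
      obtain ⟨x₁, hx₁⟩ := (hip (g e)).mp h2
      have h3 : g (e - s₁ x₁) = 0 := by rw [map_sub, hgs₁, hx₁, sub_self]
      obtain ⟨w, hw⟩ := (hig (e - s₁ x₁)).mp h3
      refine ⟨w, ?_⟩
      show mk (i w) = mk e
      apply hmkeq
      rw [hw]
      exact ⟨-x₁, by simp⟩
    · rintro ⟨w, rfl⟩
      show gbar (mk (i w)) = 0
      rw [hgbarmk, hig.apply_apply_eq_zero, map_zero]
  obtain ⟨σ₃, hσ₃⟩ := h3 Ebar wbar gbar hwbarinj hgbarsurj hexbar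
  -- U = mk⁻¹ (range σ₃)
  set Usub := Submodule.comap mk (LinearMap.range σ₃) with hUsub
  set gU : ↥Usub →ₗ[R] X₂ := g ∘ₗ Usub.subtype with hgU
  have hgUbij : Function.Bijective gU := by
    constructor
    · rintro ⟨a, ha⟩ ⟨b, hb⟩ hab
      have h2 : g (a - b) = 0 := by
        rw [map_sub, sub_eq_zero]
        exact hab
      obtain ⟨w, hw⟩ := (hig (a - b)).mp h2
      rw [Submodule.mem_comap] at ha hb
      obtain ⟨x₃, hx₃⟩ := ha
      obtain ⟨y₃, hy₃⟩ := hb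
      have h4 : mk (a - b) = wbar w := by rw [← hw]; rfl
      have h5 : gbar (mk (a - b)) = 0 := by
        rw [h4]
        exact hexbar.apply_apply_eq_zero w
      have h6 : mk (a - b) = σ₃ (x₃ - y₃) := by rw [map_sub, map_sub, hx₃, hy₃]
      have h7 : x₃ - y₃ = 0 := by
        have h7a : gbar (σ₃ (x₃ - y₃)) = x₃ - y₃ := LinearMap.congr_fun hσ₃ (x₃ - y₃)
        rw [← h6] at h7a
        rw [← h7a]
        exact h5
      rw [h7, map_zero] at h6
      have h8 : a - b ∈ S₁r := by
        have := (Submodule.Quotient.mk_eq_zero S₁r).mp h6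
        exact this
      obtain ⟨x₁, hx₁⟩ := h8
      have h9 : i₁ x₁ = 0 := by
        rw [← hgs₁, hx₁, h2]
      have h10 : x₁ = 0 := hi₁ (by rw [h9, map_zero])
      rw [h10, map_zero] at hx₁
      apply Subtype.ext
      exact sub_eq_zero.mp hx₁.symm
    · intro x₂
      obtain ⟨e, he⟩ := hmksurj (σ₃ (p x₂))
      have h2 : p (g e) = p x₂ := by
        have h3 : gbar (mk e) = p (g e) := hgbarmk e
        rw [he] at h3
        have h4 : gbar (σ₃ (p x₂)) = p x₂ := LinearMap.congr_fun hσ₃ (p x₂)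
        rw [h4] at h3
        exact h3.symm
      have h5 : p (g e - x₂) = 0 := by rw [map_sub, h2, sub_self]
      obtain ⟨x₁, hx₁⟩ := (hip (g e - x₂)).mp h5
      set e' := e - s₁ x₁ with he'
      have hmem : e' ∈ Usub := by
        rw [Submodule.mem_comap]
        refine ⟨p x₂, ?_⟩
        rw [← he]
        symm
        apply hmkeq
        exact ⟨-x₁, by simp [he']⟩
      refine ⟨⟨e', hmem⟩, ?_⟩
      show g e' = x₂
      rw [he', map_sub, hgs₁, hx₁]
      abel
  set eqU := LinearEquiv.ofBijective gU hgUbij with heqU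
  refine ⟨Usub.subtype ∘ₗ eqU.symm.toLinearMap, ?_⟩
  apply LinearMap.ext; intro x
  have h2 : gU (eqU.symm x) = x := by
    have := eqU.apply_symm_apply x
    exact this
  exact h2

lemma splitAll_proj_of_embed (R : Type) [Ring R] (PL YN PN : ModuleCat.{0} R)
    (hInj : InjDimLE1 R PL) (fN : YN →ₗ[R] PN) (hfN : Function.Injective fN)
    (hPN : Module.Projective R PN) : SplitAll R PL YN := by
  intro E i g hi hg hig
  obtain ⟨I₀, I₁, j, gI, hInj₀, hInj₁, hj, hgI, hjg⟩ := hInj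
  -- extend j along i
  obtain ⟨α, hα⟩ := hInj₀.out i hi j
  -- gI ∘ α kills range i, factor through YN
  have hkill : LinearMap.ker g ≤ LinearMap.ker (gI ∘ₗ α) := by
    intro x hx
    rw [LinearMap.mem_ker] at hx ⊢
    obtain ⟨w, rfl⟩ := (hig x).mp hx
    rw [LinearMap.comp_apply, hα w]
    exact hjg.apply_apply_eq_zero w
  set eq2 := LinearMap.quotKerEquivOfSurjective g hg with heq2
  set θ : YN →ₗ[R] I₁ := (LinearMap.ker g).liftQ (gI ∘ₗ α) hkill ∘ₗ eq2.symm.toLinearMap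
    with hθ
  have heq2mk : ∀ x : E, eq2 (Submodule.Quotient.mk x) = g x := by
    intro x
    simp [heq2, LinearMap.quotKerEquivOfSurjective, LinearMap.quotKerEquivRange_apply_mk]
  have hθval : ∀ x : E, θ (g x) = gI (α x) := by
    intro x
    have : eq2.symm (g x) = Submodule.Quotient.mk x := by
      rw [LinearEquiv.symm_apply_eq, heq2mk]
    simp [hθ, this]
  -- extend θ along fN, lift through gI
  obtain ⟨Θ, hΘ⟩ := hInj₁.out fN hfN θ
  obtain ⟨Μ, hΜ⟩ := Module.projective_lifting_property (h := hPN) gI Θ hgI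
  set θt : YN →ₗ[R] I₀ := Μ ∘ₗ fN with hθt
  have hθtval : ∀ y, gI (θt y) = θ y := by
    intro y
    rw [hθt, LinearMap.comp_apply, ← hΘ y]
    exact LinearMap.congr_fun hΜ (fN y)
  -- γ₀ = α - θt ∘ g lands in range j
  set γ₀ : E →ₗ[R] I₀ := α - θt ∘ₗ g with hγ₀
  have hγrange : ∀ x, γ₀ x ∈ LinearMap.range j := by
    intro x
    rw [← LinearMap.exact_iff.mp hjg, LinearMap.mem_ker]
    simp [hγ₀, hθtval, hθval]
  set eqj := LinearEquiv.ofInjective j hj with heqj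
  set ρ : E →ₗ[R] PL := eqj.symm.toLinearMap ∘ₗ γ₀.codRestrict (LinearMap.range j) hγrange
    with hρ
  have hρi : ρ ∘ₗ i = LinearMap.id := by
    apply LinearMap.ext; intro w
    have h1 : γ₀ (i w) = j w := by
      have h2 : g (i w) = 0 := hig.apply_apply_eq_zero w
      simp [hγ₀, h2, hα w]
    have h3 : (γ₀.codRestrict (LinearMap.range j) hγrange) (i w) = eqj w := by
      apply Subtype.ext
      simp [heqj, h1, LinearEquiv.ofInjective_apply]
    simp [hρ, LinearMap.comp_apply, h3]
  exact section_of_retraction i g hg hig ρ hρi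

set_option maxHeartbeats 2000000 in
/-- (Extension-closure of condition (b) of Lemma `genrad`.) Over an
Iwanaga-Gorenstein algebra of Gorenstein dimension at most 1, suppose the Cohen-Macaulay
modules `L` and `N` admit short exact sequences `0 → Y_L → P_L → X_L → 0` and
`0 → Y_N → P_N → X_N → 0` with `Y_L, Y_N` Cohen-Macaulay containing `L`, `N` as direct
summands, `P_L, P_N` projective, and `X_L, X_N` supported only at vertices of `I`. Then
every extension `M` of `N` by `L` admits a short exact sequence
`0 → Y_M → P_L ⊕ P_N → X_M → 0` of the same form. -/
theorem condition_b_closed_under_extensions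
    (k A ιQ : Type) [Field k] [IsAlgClosed k] [Ring A] [Algebra k A] [FiniteDimensional k A]
    [Fintype ιQ] (e : ιQ → A) (hco : CompOrthIdem e)
    (hprim : ∀ j, IsPrimitiveIdempotent (e j))
    (hIG : IwanagaGorenstein1 Aᵐᵒᵖ) (I : Set ιQ)
    (L N : ModuleCat.{0} Aᵐᵒᵖ) (hL : IsCM k A L) (hN : IsCM k A N)
    -- the sequence for L
    (YL PL XL : ModuleCat.{0} Aᵐᵒᵖ) (fL : YL →ₗ[Aᵐᵒᵖ] PL) (gL : PL →ₗ[Aᵐᵒᵖ] XL)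
    (hfL : Function.Injective fL) (hgL : Function.Surjective gL)
    (heL : Function.Exact fL gL) (hYL : IsCM k A YL)
    (hsumL : ∃ (s : L →ₗ[Aᵐᵒᵖ] YL) (r : YL →ₗ[Aᵐᵒᵖ] L), r ∘ₗ s = LinearMap.id)
    (hPL : Module.Projective Aᵐᵒᵖ PL)
    (hXL : ∀ j ∉ I, ∀ x : XL, (MulOpposite.op (e j)) • x = 0)
    -- the sequence for N
    (YN PN XN : ModuleCat.{0} Aᵐᵒᵖ) (fN : YN →ₗ[Aᵐᵒᵖ] PN) (gN : PN →ₗ[Aᵐᵒᵖ] XN)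
    (hfN : Function.Injective fN) (hgN : Function.Surjective gN)
    (heN : Function.Exact fN gN) (hYN : IsCM k A YN)
    (hsumN : ∃ (s : N →ₗ[Aᵐᵒᵖ] YN) (r : YN →ₗ[Aᵐᵒᵖ] N), r ∘ₗ s = LinearMap.id)
    (hPN : Module.Projective Aᵐᵒᵖ PN)
    (hXN : ∀ j ∉ I, ∀ x : XN, (MulOpposite.op (e j)) • x = 0)
    -- an extension of N by L
    (M : ModuleCat.{0} Aᵐᵒᵖ) (u : L →ₗ[Aᵐᵒᵖ] M) (v : M →ₗ[Aᵐᵒᵖ] N)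
    (hu : Function.Injective u) (hv : Function.Surjective v) (huv : Function.Exact u v) :
    ∃ (YM XM : ModuleCat.{0} Aᵐᵒᵖ)
      (f : YM →ₗ[Aᵐᵒᵖ] (↥PL × ↥PN)) (g : (↥PL × ↥PN) →ₗ[Aᵐᵒᵖ] XM),
      Function.Injective f ∧ Function.Surjective g ∧ Function.Exact f g ∧
      IsCM k A YM ∧
      (∃ (s : M →ₗ[Aᵐᵒᵖ] YM) (r : YM →ₗ[Aᵐᵒᵖ] M), r ∘ₗ s = LinearMap.id) ∧
      (∀ j ∉ I, ∀ x : XM, (MulOpposite.op (e j)) • x = 0) := by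
    classical
  obtain ⟨sL, rL, hsrL⟩ := hsumL
  obtain ⟨sN, rN, hsrN⟩ := hsumN
  have hYLs : SplitAll Aᵐᵒᵖ (ModuleCat.of Aᵐᵒᵖ A) YL :=
    (subsingleton_ext_iff_splitAll k A YL (ModuleCat.of Aᵐᵒᵖ A)).mp hYL
  have hYNs : SplitAll Aᵐᵒᵖ (ModuleCat.of Aᵐᵒᵖ A) YN :=
    (subsingleton_ext_iff_splitAll k A YN (ModuleCat.of Aᵐᵒᵖ A)).mp hYN
  -- the pullback E of v and rN
  set vr : (↥M × ↥YN) →ₗ[Aᵐᵒᵖ] ↥N :=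
    v ∘ₗ LinearMap.fst Aᵐᵒᵖ ↥M ↥YN - rN ∘ₗ LinearMap.snd Aᵐᵒᵖ ↥M ↥YN with hvr
  set Esub := LinearMap.ker vr with hEsub
  set E := ModuleCat.of Aᵐᵒᵖ ↥Esub with hE
  have hmemE : ∀ z : ↥M × ↥YN, z ∈ Esub ↔ v z.1 = rN z.2 := by
    intro z
    rw [hEsub, LinearMap.mem_ker, hvr]
    simp [sub_eq_zero]
  set iE : ↥L →ₗ[Aᵐᵒᵖ] E := (LinearMap.prod u 0).codRestrict Esub (fun l => by
    rw [hmemE]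
    have h1 : v (u l) = 0 := huv.apply_apply_eq_zero l
    simpa using h1) with hiE
  set πE : E →ₗ[Aᵐᵒᵖ] ↥YN := (LinearMap.snd Aᵐᵒᵖ ↥M ↥YN) ∘ₗ Esub.subtype with hπE
  set sE : ↥M →ₗ[Aᵐᵒᵖ] E := (LinearMap.prod LinearMap.id (sN ∘ₗ v)).codRestrict Esub
    (fun m => by
      rw [hmemE]
      exact (LinearMap.congr_fun hsrN (v m)).symm) with hsE
  set rE : E →ₗ[Aᵐᵒᵖ] ↥M := (LinearMap.fst Aᵐᵒᵖ ↥M ↥YN) ∘ₗ Esub.subtype with hrE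
  set emb : E →ₗ[Aᵐᵒᵖ] (↥M × ↥YN) := Esub.subtype with hemb
  have hembinj : Function.Injective emb := Submodule.injective_subtype Esub
  have hembmem : ∀ z : E, emb z ∈ Esub := fun z => SetLike.coe_mem z
  have hiEval : ∀ l, emb (iE l) = (u l, 0) := fun l => rfl
  have hiEinj : Function.Injective iE := by
    intro a b hab
    apply hu
    have h1 : emb (iE a) = emb (iE b) := congrArg (fun t => emb t) hab
    rw [hiEval, hiEval] at h1
    have := congrArg Prod.fst h1
    exact this
  have hπEiE : ∀ l, πE (iE l) = 0 := fun l => rfl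
  have hπEsurj : Function.Surjective πE := by
    intro y
    obtain ⟨m, hm⟩ := hv (rN y)
    exact ⟨⟨(m, y), (hmemE _).mpr hm⟩, rfl⟩
  have hexE : Function.Exact iE πE := by
    intro z
    constructor
    · intro hz
      have hz2 : (emb z).2 = 0 := hz
      have h1 : v (emb z).1 = 0 := by
        have h2 := (hmemE (emb z)).mp (hembmem z)
        rw [h2, hz2, map_zero]
      obtain ⟨l, hl⟩ := (huv _).mp h1
      refine ⟨l, ?_⟩
      apply hembinj
      rw [hiEval]
      exact Prod.ext hl hz2.symm
    · rintro ⟨l, rfl⟩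
      exact hπEiE l
  have hrsE : ∀ m, rE (sE m) = m := fun m => rfl
  -- the pushout E' of iE and sL
  set τ1 : ↥L →ₗ[Aᵐᵒᵖ] (↥YL × ↥E) := LinearMap.prod sL (-iE) with hτ1
  set Wr1 := LinearMap.range τ1 with hWr1
  set E' := ModuleCat.of Aᵐᵒᵖ ((↥YL × ↥E) ⧸ Wr1) with hE'
  set mk1 : (↥YL × ↥E) →ₗ[Aᵐᵒᵖ] E' := Wr1.mkQ with hmk1
  have hmk1eq : ∀ a b : ↥YL × ↥E, a - b ∈ Wr1 → mk1 a = mk1 b := fun a b hab =>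
    (Submodule.Quotient.eq Wr1).mpr hab
  have hmk1surj : Function.Surjective mk1 := Wr1.mkQ_surjective
  set ι : ↥YL →ₗ[Aᵐᵒᵖ] E' := mk1 ∘ₗ LinearMap.inl Aᵐᵒᵖ ↥YL ↥E with hι
  have hkill1 : ∀ z ∈ Wr1, z ∈ LinearMap.ker (πE ∘ₗ LinearMap.snd Aᵐᵒᵖ ↥YL ↥E) := by
    rintro z ⟨l, rfl⟩
    rw [LinearMap.mem_ker]
    show πE (τ1 l).2 = 0
    have h1 : (τ1 l).2 = -iE l := rfl
    rw [h1, map_neg, hπEiE, neg_zero]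
  set π' : E' →ₗ[Aᵐᵒᵖ] ↥YN := Wr1.liftQ (πE ∘ₗ LinearMap.snd Aᵐᵒᵖ ↥YL ↥E) hkill1 with hπ'
  have hπ'mk : ∀ z : ↥YL × ↥E, π' (mk1 z) = πE z.2 := fun z => rfl
  have hιinj : Function.Injective ι := by
    intro a b hab
    have h1 : ((a, 0) : ↥YL × ↥E) - (b, 0) ∈ Wr1 := (Submodule.Quotient.eq Wr1).mp hab
    obtain ⟨l, hl⟩ := h1
    have h2 : -iE l = 0 := by
      have := congrArg Prod.snd hl
      simpa [hτ1] using this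
    have h2' : iE l = 0 := by
      have := neg_eq_zero.mp h2
      exact this
    have h3 : l = 0 := hiEinj (by rw [h2', map_zero])
    have h4 : sL l = a - b := by
      have := congrArg Prod.fst hl
      simpa [hτ1] using this
    rw [h3, map_zero] at h4
    exact sub_eq_zero.mp h4.symm
  have hπ'surj : Function.Surjective π' := by
    intro y
    obtain ⟨z, hz⟩ := hπEsurj y
    exact ⟨mk1 (0, z), hz⟩
  have hexE' : Function.Exact ι π' := by
    intro z
    constructor
    · intro hz
      obtain ⟨⟨yl, w⟩, rfl⟩ := hmk1surj z
      have h1 : πE w = 0 := hz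
      obtain ⟨l, hl⟩ := (hexE w).mp h1
      refine ⟨yl + sL l, ?_⟩
      show mk1 (yl + sL l, 0) = mk1 (yl, w)
      apply hmk1eq
      refine ⟨l, ?_⟩
      have h2 : ((yl + sL l, 0) : ↥YL × ↥E) - (yl, w) = (sL l, -w) := by
        apply Prod.ext <;> simp
      rw [h2, hτ1]
      apply Prod.ext
      · rfl
      · show -iE l = -w
        rw [hl]
    · rintro ⟨yl, rfl⟩
      show π' (mk1 (yl, 0)) = 0
      rw [hπ'mk]
      exact map_zero πE
  -- M is a direct summand of E'
  set s : ↥M →ₗ[Aᵐᵒᵖ] E' := mk1 ∘ₗ (LinearMap.inr Aᵐᵒᵖ ↥YL ↥E ∘ₗ sE) with hs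
  set q1 : (↥YL × ↥E) →ₗ[Aᵐᵒᵖ] E :=
    iE ∘ₗ (rL ∘ₗ LinearMap.fst Aᵐᵒᵖ ↥YL ↥E) + LinearMap.snd Aᵐᵒᵖ ↥YL ↥E with hq1
  have hkillq : ∀ z ∈ Wr1, z ∈ LinearMap.ker q1 := by
    rintro z ⟨l, rfl⟩
    rw [LinearMap.mem_ker]
    have h1 : q1 (τ1 l) = iE (rL (sL l)) + -iE l := rfl
    rw [h1]
    have h2 : rL (sL l) = l := LinearMap.congr_fun hsrL l
    rw [h2, add_neg_cancel]
  set r : E' →ₗ[Aᵐᵒᵖ] ↥M := rE ∘ₗ Wr1.liftQ q1 hkillq with hr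
  have hrs : r ∘ₗ s = LinearMap.id := by
    apply LinearMap.ext; intro m
    show rE (q1 (0, sE m)) = m
    have h1 : q1 (0, sE m) = iE (rL 0) + sE m := rfl
    rw [h1, map_zero, map_zero, zero_add]
    exact hrsE m
  -- E' is Cohen-Macaulay
  have hE's : SplitAll Aᵐᵒᵖ (ModuleCat.of Aᵐᵒᵖ A) E' :=
    splitAll_closed_extensions Aᵐᵒᵖ (ModuleCat.of Aᵐᵒᵖ A) YL E' YN ι π'
      hιinj hπ'surj hexE' hYLs hYNs
  have hYMcm : IsCM k A E' := (subsingleton_ext_iff_splitAll k A E' (ModuleCat.of Aᵐᵒᵖ A)).mpr hE's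
  -- extend fL along ι using the pushout G
  set τ2 : ↥YL →ₗ[Aᵐᵒᵖ] (↥PL × ↥E') := LinearMap.prod fL (-ι) with hτ2
  set Wr2 := LinearMap.range τ2 with hWr2
  set G := ModuleCat.of Aᵐᵒᵖ ((↥PL × ↥E') ⧸ Wr2) with hG
  set mk2 : (↥PL × ↥E') →ₗ[Aᵐᵒᵖ] G := Wr2.mkQ with hmk2
  have hmk2eq : ∀ a b : ↥PL × ↥E', a - b ∈ Wr2 → mk2 a = mk2 b := fun a b hab =>
    (Submodule.Quotient.eq Wr2).mpr hab
  have hmk2surj : Function.Surjective mk2 := Wr2.mkQ_surjective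
  set jG : ↥PL →ₗ[Aᵐᵒᵖ] G := mk2 ∘ₗ LinearMap.inl Aᵐᵒᵖ ↥PL ↥E' with hjG
  have hkill2 : ∀ z ∈ Wr2, z ∈ LinearMap.ker (π' ∘ₗ LinearMap.snd Aᵐᵒᵖ ↥PL ↥E') := by
    rintro z ⟨yl, rfl⟩
    rw [LinearMap.mem_ker]
    show π' (τ2 yl).2 = 0
    have h1 : (τ2 yl).2 = -ι yl := rfl
    rw [h1, map_neg, hexE'.apply_apply_eq_zero yl, neg_zero]
  set πG : G →ₗ[Aᵐᵒᵖ] ↥YN := Wr2.liftQ (π' ∘ₗ LinearMap.snd Aᵐᵒᵖ ↥PL ↥E') hkill2 with hπG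
  have hπGmk : ∀ z : ↥PL × ↥E', πG (mk2 z) = π' z.2 := fun z => rfl
  have hjGinj : Function.Injective jG := by
    intro a b hab
    have h1 : ((a, 0) : ↥PL × ↥E') - (b, 0) ∈ Wr2 := (Submodule.Quotient.eq Wr2).mp hab
    obtain ⟨yl, hyl⟩ := h1
    have h2 : -ι yl = 0 := by
      have := congrArg Prod.snd hyl
      simpa [hτ2] using this
    have h2' : ι yl = 0 := by
      have := neg_eq_zero.mp h2
      exact this
    have h3 : yl = 0 := hιinj (by rw [h2', map_zero])
    have h4 : fL yl = a - b := by
      have := congrArg Prod.fst hyl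
      simpa [hτ2] using this
    rw [h3, map_zero] at h4
    exact sub_eq_zero.mp h4.symm
  have hπGsurj : Function.Surjective πG := by
    intro y
    obtain ⟨z, hz⟩ := hπ'surj y
    exact ⟨mk2 (0, z), hz⟩
  have hexG : Function.Exact jG πG := by
    intro z
    constructor
    · intro hz
      obtain ⟨⟨pl, w⟩, rfl⟩ := hmk2surj z
      have h1 : π' w = 0 := hz
      obtain ⟨yl, hyl⟩ := (hexE' w).mp h1
      refine ⟨pl + fL yl, ?_⟩
      show mk2 (pl + fL yl, 0) = mk2 (pl, w)
      apply hmk2eq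
      refine ⟨yl, ?_⟩
      have h2 : ((pl + fL yl, 0) : ↥PL × ↥E') - (pl, w) = (fL yl, -w) := by
        apply Prod.ext <;> simp
      rw [h2, hτ2]
      apply Prod.ext
      · rfl
      · show -ι yl = -w
        rw [hyl]
    · rintro ⟨pl, rfl⟩
      show πG (mk2 (pl, 0)) = 0
      rw [hπGmk]
      exact map_zero π'
  have hSA : SplitAll Aᵐᵒᵖ PL YN :=
    splitAll_proj_of_embed Aᵐᵒᵖ PL YN PN (hIG.1 PL hPL) fN hfN hPN
  obtain ⟨σG, hσG⟩ := hSA G jG πG hjGinj hπGsurj hexG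
  obtain ⟨ρG, hρG⟩ := retraction_of_section jG πG hjGinj hexG σG hσG
  set φ : E' →ₗ[Aᵐᵒᵖ] ↥PL := ρG ∘ₗ (mk2 ∘ₗ LinearMap.inr Aᵐᵒᵖ ↥PL ↥E') with hφ
  have hφι : ∀ yl, φ (ι yl) = fL yl := by
    intro yl
    have h1 : mk2 (0, ι yl) = mk2 (fL yl, 0) := by
      apply hmk2eq
      refine ⟨-yl, ?_⟩
      have h2 : ((0, ι yl) : ↥PL × ↥E') - (fL yl, 0) = (-fL yl, ι yl) := by
        apply Prod.ext <;> simp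
      rw [h2, hτ2]
      apply Prod.ext
      · show fL (-yl) = -fL yl
        exact map_neg fL yl
      · show -ι (-yl) = ι yl
        rw [map_neg, neg_neg]
    show ρG (mk2 (0, ι yl)) = fL yl
    rw [h1]
    exact LinearMap.congr_fun hρG (fL yl)
  -- assemble the final sequence
  set f : E' →ₗ[Aᵐᵒᵖ] (↥PL × ↥PN) := LinearMap.prod φ (fN ∘ₗ π') with hf
  have hfval : ∀ z : E', f z = (φ z, fN (π' z)) := fun z => rfl
  set Rf := LinearMap.range f with hRf
  set XM := ModuleCat.of Aᵐᵒᵖ ((↥PL × ↥PN) ⧸ Rf) with hXM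
  set gM : (↥PL × ↥PN) →ₗ[Aᵐᵒᵖ] XM := Rf.mkQ with hgM
  have hgM0 : ∀ z : ↥PL × ↥PN, gM z = 0 ↔ z ∈ Rf := fun z =>
    Submodule.Quotient.mk_eq_zero Rf
  have hgMsurj : Function.Surjective gM := Rf.mkQ_surjective
  have hfinj : Function.Injective f := by
    intro a b hab
    have h0 : f (a - b) = 0 := by rw [map_sub, hab, sub_self]
    have h1 : fN (π' (a - b)) = 0 := congrArg Prod.snd h0
    have h2 : π' (a - b) = 0 := hfN (by rw [h1, map_zero])
    obtain ⟨yl, hyl⟩ := (hexE' (a - b)).mp h2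
    have h3 : φ (a - b) = 0 := congrArg Prod.fst h0
    rw [← hyl, hφι] at h3
    have h4 : yl = 0 := hfL (by rw [h3, map_zero])
    rw [h4, map_zero] at hyl
    exact sub_eq_zero.mp hyl.symm
  have hexf : Function.Exact f gM := by
    intro z
    constructor
    · intro hz
      obtain ⟨y, hy⟩ := (hgM0 z).mp hz
      exact ⟨y, hy⟩
    · rintro ⟨y, rfl⟩
      exact (hgM0 (f y)).mpr ⟨y, rfl⟩
  refine ⟨E', XM, f, gM, hfinj, hgMsurj, hexf, hYMcm, ⟨s, r, hrs⟩, ?_⟩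
  -- support of XM
  intro j hj x
  obtain ⟨pq, rfl⟩ := hgMsurj x
  set c : Aᵐᵒᵖ := MulOpposite.op (e j) with hc
  have hcc : c * c = c := by
    rw [hc, ← MulOpposite.op_mul, (hco.2.1 j)]
  have h1 : gN (c • pq.2) = 0 := by
    rw [map_smul]
    exact hXN j hj _
  obtain ⟨y, hy⟩ := (heN (c • pq.2)).mp h1
  obtain ⟨x₀, hx₀⟩ := hπ'surj y
  set r0 : ↥PL := c • pq.1 - φ x₀ with hr0
  have hsum : c • pq = f x₀ + (r0, 0) := by
    have h2 : f x₀ = (φ x₀, c • pq.2) := by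
      rw [hfval, hx₀, hy]
    rw [h2, hr0]
    apply Prod.ext
    · show (c • pq).1 = φ x₀ + (c • pq.1 - φ x₀)
      simp
    · show (c • pq).2 = c • pq.2 + 0
      simp
  have h3 : gL (c • r0) = 0 := by
    rw [map_smul]
    exact hXL j hj _
  obtain ⟨y', hy'⟩ := (heL (c • r0)).mp h3
  have t1 : c • gM pq = gM (r0, 0) := by
    rw [← map_smul, hsum, map_add]
    have h4 : gM (f x₀) = 0 := (hgM0 (f x₀)).mpr ⟨x₀, rfl⟩
    rw [h4, zero_add]
  have t2 : c • gM (r0, (0 : ↥PN)) = 0 := by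
    rw [← map_smul]
    have h4 : c • ((r0, (0 : ↥PN)) : ↥PL × ↥PN) = (c • r0, (0 : ↥PN)) := by
      apply Prod.ext
      · rfl
      · show c • (0 : ↥PN) = 0
        rw [smul_zero]
    rw [h4]
    refine (hgM0 _).mpr ⟨ι y', ?_⟩
    rw [hfval]
    apply Prod.ext
    · show φ (ι y') = c • r0
      rw [hφι]
      exact hy'
    · show fN (π' (ι y')) = 0
      rw [hexE'.apply_apply_eq_zero y', map_zero]
  calc c • gM pq = (c * c) • gM pq := by rw [hcc]
  _ = c • (c • gM pq) := (smul_smul c c _).symm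
  _ = c • gM (r0, 0) := by rw [t1]
  _ = 0 := t2
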